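/- For every function g : ℕ → ℕ there exists a function h[g] : ℕ → ℕ such that every g-transformation sequence (A_1,b_1),...,(A_r,b_r) of bare-bones c-pairs satisfies r ≤ h[g](n(A_1,b_1)). -/

import Mathlib

/-- The size `n(A,b) = 2^b + ∑_{x ∈ A} x` of a bare-bones pair. -/
def bbpSize (p : Multiset ℕ × ℕ) : ℕ := 2 ^ p.2 + p.1.sum

/-- A folding of a bare-bones `c`-pair: remove one occurrence of `c` from the multiset and
increase the integer component by some nonnegative amount. -/
def IsFolding (c : ℕ) (p q : Multiset ℕ × ℕ) : Prop :=
  c ∈ p.1 ∧ q.1 = p.1.erase c ∧ p.2 ≤ q.2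

/-- An extension of a bare-bones `c`-pair: remove one occurrence of some `x < c`, add `d₁ ≥ 0`
occurrences of `x + 1`, and increase the integer component by some nonnegative amount. -/
def IsExtension (c : ℕ) (p q : Multiset ℕ × ℕ) : Prop :=
  ∃ x ∈ p.1, x < c ∧ ∃ d₁ : ℕ, q.1 = p.1.erase x + Multiset.replicate d₁ (x + 1) ∧ p.2 ≤ q.2

/-- A `g`-transformation: a folding or extension whose resulting size is at most `g` of the
size of the input pair. -/
def IsGTrans (c : ℕ) (g : ℕ → ℕ) (p q : Multiset ℕ × ℕ) : Prop :=
  (IsFolding c p q ∨ IsExtension c p q) ∧ bbpSize q ≤ g (bbpSize p)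

/-- Lexicographic measure: the tuple of counts of `1, 2, …, c`. -/
def bbpMu (c : ℕ) (p : Multiset ℕ × ℕ) : Lex (Fin c → ℕ) :=
  toLex fun j => p.1.count (j.1 + 1)

lemma bbp_card_le_sum (s : Multiset ℕ) (h : ∀ x ∈ s, 1 ≤ x) : Multiset.card s ≤ s.sum := by
  induction s using Multiset.induction with
  | empty => simp
  | cons a s ih =>
    simp only [Multiset.card_cons, Multiset.sum_cons]
    have h1 : 1 ≤ a := h a (Multiset.mem_cons_self a s)
    have h2 : Multiset.card s ≤ s.sum := ih fun x hx => h x (Multiset.mem_cons_of_mem hx)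
    omega

/-- A finite multiset dominating all multisets with entries in `[1,c]` and sum ≤ n. -/
def bbpBig (n c : ℕ) : Multiset ℕ := (Finset.range (c + 1)).sum fun v => Multiset.replicate n v

/-- A finite set of states containing all states of size ≤ n with entries in `[1,c]`. -/
def bbpStates (n c : ℕ) : Finset (Multiset ℕ × ℕ) :=
  (bbpBig n c).powerset.toFinset ×ˢ Finset.range (n + 1)

lemma bbp_mem_states {n c : ℕ} {p : Multiset ℕ × ℕ} (hs : bbpSize p ≤ n)
    (he : ∀ x ∈ p.1, 1 ≤ x ∧ x ≤ c) : p ∈ bbpStates n c := by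
  have hsum : p.1.sum ≤ n := le_trans (Nat.le_add_left _ _) hs
  have hcard : Multiset.card p.1 ≤ n :=
    le_trans (bbp_card_le_sum p.1 fun x hx => (he x hx).1) hsum
  refine Finset.mem_product.mpr ⟨?_, ?_⟩
  · rw [Multiset.mem_toFinset, Multiset.mem_powerset, Multiset.le_iff_count]
    intro v
    by_cases hv : v ∈ p.1
    · have hvc : v ≤ c := (he v hv).2
      have h1 : p.1.count v ≤ n := le_trans (Multiset.count_le_card v p.1) hcard
      have h2 : (n : ℕ) ≤ (bbpBig n c).count v := by
        rw [bbpBig, Multiset.count_sum']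
        have hmem : v ∈ Finset.range (c + 1) := Finset.mem_range.mpr (by omega)
        calc n = (Multiset.replicate n v).count v := by
                  rw [Multiset.count_replicate_self]
          _ ≤ _ := Finset.single_le_sum
              (f := fun u => (Multiset.replicate n u).count v)
              (fun i _ => Nat.zero_le _) hmem
      omega
    · rw [← Multiset.count_eq_zero] at hv
      omega
  · have h1 : 2 ^ p.2 ≤ n := le_trans (Nat.le_add_right _ _) hs
    have h2 : p.2 < 2 ^ p.2 := Nat.lt_two_pow_self (n := p.2)
    exact Finset.mem_range.mpr (by omega)

lemma bbp_mu_lt {c : ℕ} {p q : Multiset ℕ × ℕ} (he : ∀ x ∈ p.1, 1 ≤ x ∧ x ≤ c)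
    (h : IsFolding c p q ∨ IsExtension c p q) : bbpMu c q < bbpMu c p := by
  rcases h with ⟨hc, hq1, -⟩ | ⟨x, hx, hxc, d₁, hq1, -⟩
  · obtain ⟨h1c, -⟩ := he c hc
    refine ⟨⟨c - 1, by omega⟩, ?_, ?_⟩
    · intro j hj
      have hj' : (j : ℕ) < c - 1 := hj
      show q.1.count (j.1 + 1) = p.1.count (j.1 + 1)
      rw [hq1, Multiset.count_erase_of_ne (by omega)]
    · show q.1.count (c - 1 + 1) < p.1.count (c - 1 + 1)
      have hcc : c - 1 + 1 = c := by omega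
      rw [hcc, hq1, Multiset.count_erase_self]
      have := Multiset.count_pos.mpr hc
      omega
  · obtain ⟨h1x, -⟩ := he x hx
    refine ⟨⟨x - 1, by omega⟩, ?_, ?_⟩
    · intro j hj
      have hj' : (j : ℕ) < x - 1 := hj
      show q.1.count (j.1 + 1) = p.1.count (j.1 + 1)
      rw [hq1, Multiset.count_add, Multiset.count_erase_of_ne (by omega),
        Multiset.count_replicate, if_neg (by omega)]
      omega
    · show q.1.count (x - 1 + 1) < p.1.count (x - 1 + 1)
      have hxx : x - 1 + 1 = x := by omega
      rw [hxx, hq1, Multiset.count_add, Multiset.count_erase_self,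
        Multiset.count_replicate, if_neg (by omega)]
      have := Multiset.count_pos.mpr hx
      omega

open Classical in
lemma bbp_key (g : ℕ → ℕ) (c : ℕ) (p : Multiset ℕ × ℕ) :
    ∃ B : ℕ, ∀ (r : ℕ) (P : ℕ → Multiset ℕ × ℕ), P 0 = p →
      (∀ i < r, ∀ x ∈ (P i).1, 1 ≤ x ∧ x ≤ c) →
      (∀ i, i + 1 < r → IsGTrans c g (P i) (P (i + 1))) →
      r ≤ B := by
  have wf : WellFounded (fun a b : Multiset ℕ × ℕ => bbpMu c a < bbpMu c b) :=
    InvImage.wf _ IsWellFounded.wf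
  induction p using WellFounded.induction wf with
  | _ p IH =>
  choose f hf using IH
  set m := g (bbpSize p) with hm
  refine ⟨1 + (bbpStates m c).sup
    (fun q => if h : bbpMu c q < bbpMu c p then f q h else 0), ?_⟩
  intro r P hP0 hent htr
  rcases Nat.lt_or_ge r 2 with hr | hr
  · omega
  · have step : IsGTrans c g (P 0) (P 1) := htr 0 (by omega)
    have hlt : bbpMu c (P 1) < bbpMu c p := by
      rw [← hP0]
      exact bbp_mu_lt (hP0 ▸ hent 0 (by omega)) step.1
    have hqF : P 1 ∈ bbpStates m c := by
      refine bbp_mem_states ?_ (hent 1 (by omega))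
      rw [hm, ← hP0]
      exact step.2
    have hrec : r - 1 ≤ f (P 1) hlt := by
      refine hf (P 1) hlt (r - 1) (fun i => P (i + 1)) rfl ?_ ?_
      · intro i hi x hx
        exact hent (i + 1) (by omega) x hx
      · intro i hi
        exact htr (i + 1) (by omega)
    have hsup : f (P 1) hlt ≤ (bbpStates m c).sup
        (fun q => if h : bbpMu c q < bbpMu c p then f q h else 0) := by
      have := Finset.le_sup (f := fun q =>
        if h : bbpMu c q < bbpMu c p then f q h else 0) hqF
      simpa only [dif_pos hlt] using this
    omega

/-- For every function `g : ℕ → ℕ` there is a function `h[g] : ℕ → ℕ` such that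
every `g`-transformation sequence of bare-bones `c`-pairs `(A_0,b_0), …, (A_{r-1},b_{r-1})`
(a sequence of `r` pairs, each a `g`-transformation of the previous one, entries of each
multiset lying in `{1, …, c}`) has length `r ≤ h[g](n(A_0,b_0))`. -/
theorem stmt_14 (g : ℕ → ℕ) (c : ℕ) :
    ∃ h : ℕ → ℕ, ∀ (r : ℕ) (P : ℕ → Multiset ℕ × ℕ),
      (∀ i < r, ∀ x ∈ (P i).1, 1 ≤ x ∧ x ≤ c) →
      (∀ i, i + 1 < r → IsGTrans c g (P i) (P (i + 1))) →
      r ≤ h (bbpSize (P 0)) := by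
  choose B hB using bbp_key g c
  refine ⟨fun n => (bbpStates n c).sup B, ?_⟩
  intro r P hent htr
  rcases Nat.eq_zero_or_pos r with hr | hr
  · simp [hr]
  · have hmem : P 0 ∈ bbpStates (bbpSize (P 0)) c :=
      bbp_mem_states le_rfl (hent 0 hr)
    exact le_trans (hB (P 0) r P rfl hent htr) (Finset.le_sup hmem)
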